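/- Completeness of the extensions of DmbC with respect to swap Kripke models: for each logic L ∈ {DmbCciw, DmbCci, DbC, DCi} and every set of formulas Γ ∪ {φ} ⊆ For(Σ), if Γ ⊨_L φ then Γ ⊢_L φ. -/
import Mathlib


/-- Formulas over the signature Σ = {∧, ∨, →, ¬, ∘, O}, with countably many
propositional variables. -/
inductive Form : Type
  | var : ℕ → Form
  | and : Form → Form → Form
  | or : Form → Form → Form
  | imp : Form → Form → Form
  | neg : Form → Form
  | circ : Form → Form
  | obl : Form → Form

namespace Form
/-- ⊥_α := (α ∧ ¬α) ∧ ∘α -/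
def bot (α : Form) : Form := (α.and α.neg).and α.circ
end Form

/-- Theorems of the extension of DmbC by the extra axiom schemas in `E`:
CPL⁺ axioms, (EM), (bc), (O-K), (O-E), the axioms in `E`,
with rules Modus Ponens and O-necessitation. -/
inductive ThmExt (E : Form → Prop) : Form → Prop
  | A1 (α β : Form) : ThmExt E (α.imp (β.imp α))
  | A2 (α β γ : Form) : ThmExt E ((α.imp (β.imp γ)).imp ((α.imp β).imp (α.imp γ)))
  | A3 (α β : Form) : ThmExt E (α.imp (β.imp (α.and β)))
  | A4 (α β : Form) : ThmExt E ((α.and β).imp α)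
  | A5 (α β : Form) : ThmExt E ((α.and β).imp β)
  | A6 (α β : Form) : ThmExt E (α.imp (α.or β))
  | A7 (α β : Form) : ThmExt E (β.imp (α.or β))
  | A8 (α β γ : Form) : ThmExt E ((α.imp γ).imp ((β.imp γ).imp ((α.or β).imp γ)))
  | A9 (α β : Form) : ThmExt E (((α.imp β).imp α).imp α)
  | EM (α : Form) : ThmExt E (α.or α.neg)
  | bc (α β : Form) : ThmExt E (α.circ.imp (α.imp (α.neg.imp β)))
  | OK (α β : Form) : ThmExt E ((α.imp β).obl.imp (α.obl.imp β.obl))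
  | OE (α : Form) : ThmExt E (α.bot.obl.imp α.bot)
  | extra {φ : Form} : E φ → ThmExt E φ
  | mp {α β : Form} : ThmExt E (α.imp β) → ThmExt E α → ThmExt E β
  | nec {α : Form} : ThmExt E α → ThmExt E α.obl

/-- Instances of axiom (ciw) ∘α ∨ (α ∧ ¬α). -/
def ciwAx (φ : Form) : Prop := ∃ α : Form, φ = α.circ.or (α.and α.neg)

/-- Instances of axiom (ci) ¬∘α → (α ∧ ¬α). -/
def ciAx (φ : Form) : Prop := ∃ α : Form, φ = α.circ.neg.imp (α.and α.neg)

/-- Instances of axiom (cf) ¬¬α → α. -/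
def cfAx (φ : Form) : Prop := ∃ α : Form, φ = α.neg.neg.imp α

/-- The four extensions of DmbC considered here. -/
inductive ExtLogic : Type
  | DmbCciw | DmbCci | DbC | DCi

/-- The extra axiom schemas of each logic. -/
def extAx : ExtLogic → Form → Prop
  | .DmbCciw => ciwAx
  | .DmbCci => ciAx
  | .DbC => cfAx
  | .DCi => fun φ => ciAx φ ∨ cfAx φ

/-- conj γ [γ₂,…,γ_k] = γ ∧ γ₂ ∧ … ∧ γ_k -/
def conj (γ : Form) : List Form → Form
  | [] => γ
  | δ :: l => γ.and (conj δ l)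

/-- Γ ⊢_L φ iff ⊢_L φ or ⊢_L (γ₁ ∧ … ∧ γ_k) → φ for some γ₁,…,γ_k ∈ Γ, k ≥ 1. -/
def DerivExt (L : ExtLogic) (Γ : Set Form) (φ : Form) : Prop :=
  ThmExt (extAx L) φ ∨ ∃ (γ : Form) (l : List Form),
    (∀ δ ∈ γ :: l, δ ∈ Γ) ∧ ThmExt (extAx L) ((conj γ l).imp φ)

/-- The three snapshots T = (1,0), t = (1,1), F = (0,1). -/
inductive SV : Type
  | T | t | F
deriving DecidableEq

/-- First coordinate of a snapshot. -/
def SV.p1 : SV → Bool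
  | .T => true | .t => true | .F => false

/-- Second coordinate of a snapshot. -/
def SV.p2 : SV → Bool
  | .T => false | .t => true | .F => true

/-- Designated values: D = {T, t}, i.e. first coordinate is 1. -/
def SV.desig (a : SV) : Prop := a.p1 = true

/-- Membership condition for the multioperation interpreting ¬ in each logic:
¬̃ for DmbCciw and DmbCci, ¬̃₁ for DbC and DCi.  Here `c` is the candidate value
of ¬α and `a` the value of α. -/
def negCond : ExtLogic → SV → SV → Prop
  | .DmbCciw, c, a => c.p1 = a.p2
  | .DmbCci, c, a => c.p1 = a.p2
  | .DbC, c, a => c.p1 = a.p2 ∧ c.p2 ≤ a.p1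
  | .DCi, c, a => c.p1 = a.p2 ∧ c.p2 ≤ a.p1

/-- Membership condition for the multioperation interpreting ∘ in each logic:
∘̃₁ for DmbCciw, ∘̃₂ for DmbCci and DCi, ∘̃ for DbC. -/
def circCond : ExtLogic → SV → SV → Prop
  | .DmbCciw, c, a => c.p1 = !(a.p1 && a.p2)
  | .DmbCci, c, a => c.p1 = !(a.p1 && a.p2) ∧ c.p2 = (a.p1 && a.p2)
  | .DbC, c, a => c.p1 ≤ !(a.p1 && a.p2)
  | .DCi, c, a => c.p1 = !(a.p1 && a.p2) ∧ c.p2 = (a.p1 && a.p2)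

/-- Swap Kripke model conditions for the logic L on a serial frame (W,R) with
valuations v_w : Form → SV. -/
structure IsModelExt (L : ExtLogic) {W : Type} (R : W → W → Prop)
    (v : W → Form → SV) : Prop where
  serial : ∀ w, ∃ w', R w w'
  and_ : ∀ w α β, (v w (α.and β)).p1 = ((v w α).p1 && (v w β).p1)
  or_ : ∀ w α β, (v w (α.or β)).p1 = ((v w α).p1 || (v w β).p1)
  imp_ : ∀ w α β, (v w (α.imp β)).p1 = (!(v w α).p1 || (v w β).p1)
  neg_ : ∀ w α, negCond L (v w α.neg) (v w α)
  circ_ : ∀ w α, circCond L (v w α.circ) (v w α)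
  obl_ : ∀ w α, ((v w α.obl).p1 = true ↔ ∀ w', R w w' → (v w' α).p1 = true)

/-- Γ ⊨_L φ : semantic consequence over all swap Kripke models for L. -/
def SemExt (L : ExtLogic) (Γ : Set Form) (φ : Form) : Prop :=
  ∀ (W : Type) (R : W → W → Prop) (v : W → Form → SV), Nonempty W →
    IsModelExt L R v → ∀ w : W, (∀ γ ∈ Γ, (v w γ).desig) → (v w φ).desig
namespace Completeness

/-- Derivability from hypotheses: theorems, hypotheses, modus ponens. -/
inductive Der (E : Form → Prop) (Γ : Set Form) : Form → Prop
  | thm {φ} : ThmExt E φ → Der E Γ φ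
  | hyp {φ} : φ ∈ Γ → Der E Γ φ
  | mp {α β} : Der E Γ (α.imp β) → Der E Γ α → Der E Γ β

variable {E : Form → Prop}

theorem thm_id (E : Form → Prop) (α : Form) : ThmExt E (α.imp α) :=
  .mp (.mp (.A2 α (α.imp α) α) (.A1 α (α.imp α))) (.A1 α α)

theorem thm_comp {α β γ : Form} (h1 : ThmExt E (α.imp β)) (h2 : ThmExt E (β.imp γ)) :
    ThmExt E (α.imp γ) :=
  .mp (.mp (.A2 α β γ) (.mp (.A1 (β.imp γ) α) h2)) h1

theorem Der.cut {Γ Δ : Set Form} {φ : Form} (h : ∀ δ ∈ Δ, Der E Γ δ)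
    (hd : Der E Δ φ) : Der E Γ φ := by
  induction hd with
  | thm h' => exact .thm h'
  | hyp h' => exact h _ h'
  | mp _ _ ih1 ih2 => exact .mp ih1 ih2

theorem Der.mono {Γ Γ' : Set Form} {φ : Form} (h : Γ ⊆ Γ') (hd : Der E Γ φ) :
    Der E Γ' φ :=
  hd.cut (fun _ hδ => .hyp (h hδ))

theorem ded {Γ : Set Form} {α β : Form} (h : Der E (insert α Γ) β) :
    Der E Γ (α.imp β) := by
  induction h with
  | @thm φ h' => exact .mp (.thm (.A1 φ α)) (.thm h')
  | @hyp φ h' =>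
    rcases h' with h' | h'
    · subst h'; exact .thm (thm_id E _)
    · exact .mp (.thm (.A1 φ α)) (.hyp h')
  | mp _ _ ih1 ih2 => exact .mp (.mp (.thm (.A2 α _ _)) ih1) ih2

theorem Der.compact {Γ : Set Form} {φ : Form} (h : Der E Γ φ) :
    ∃ l : List Form, (∀ δ ∈ l, δ ∈ Γ) ∧ Der E {x | x ∈ l} φ := by
  induction h with
  | @thm φ h' => exact ⟨[], by simp, .thm h'⟩
  | @hyp φ h' => exact ⟨[φ], by simp [h'], .hyp (by simp)⟩
  | mp _ _ ih1 ih2 =>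
    obtain ⟨l1, hl1, d1⟩ := ih1
    obtain ⟨l2, hl2, d2⟩ := ih2
    refine ⟨l1 ++ l2, ?_, .mp (d1.mono ?_) (d2.mono ?_)⟩
    · intro x hx; rcases List.mem_append.1 hx with h | h
      exacts [hl1 x h, hl2 x h]
    · intro x hx; exact List.mem_append.2 (Or.inl hx)
    · intro x hx; exact List.mem_append.2 (Or.inr hx)

theorem der_empty {φ : Form} (h : Der E ∅ φ) : ThmExt E φ := by
  induction h with
  | thm h' => exact h'
  | hyp h' => exact absurd h' (Set.notMem_empty _)
  | mp _ _ ih1 ih2 => exact .mp ih1 ih2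

theorem conj_mem_der {Γ : Set Form} {γ : Form} {l : List Form}
    (h : ∀ δ ∈ γ :: l, δ ∈ Γ) : Der E Γ (conj γ l) := by
  induction l generalizing γ with
  | nil => exact .hyp (h γ (by simp))
  | cons δ l ih =>
    exact .mp (.mp (.thm (.A3 _ _)) (.hyp (h γ (by simp))))
      (ih (fun x hx => h x (by simp at hx ⊢; tauto)))

theorem conj_proj {γ : Form} {l : List Form} :
    ∀ δ ∈ γ :: l, ThmExt E ((conj γ l).imp δ) := by
  induction l generalizing γ with
  | nil =>
    intro δ hδ; simp at hδ; subst hδ; exact thm_id E _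
  | cons ε l ih =>
    intro δ hδ
    rcases List.mem_cons.1 hδ with rfl | h
    · exact .A4 _ _
    · exact thm_comp (.A5 _ _) (ih δ h)

theorem thm_conj_imp {γ : Form} {l : List Form} {φ : Form}
    (hd : Der E {x | x ∈ γ :: l} φ) : ThmExt E ((conj γ l).imp φ) := by
  have h1 : Der E (insert (conj γ l) ∅) φ :=
    hd.cut (fun δ hδ => .mp (.thm (conj_proj δ hδ)) (.hyp (by simp)))
  exact der_empty (ded h1)

theorem der_iff {L : ExtLogic} {Γ : Set Form} {φ : Form} :
    Der (extAx L) Γ φ ↔ DerivExt L Γ φ := by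
  constructor
  · intro h
    obtain ⟨l, hl, hd⟩ := h.compact
    rcases l with _ | ⟨γ, l'⟩
    · exact Or.inl (der_empty (hd.mono (by simp)))
    · exact Or.inr ⟨γ, l', hl, thm_conj_imp hd⟩
  · rintro (h | ⟨γ, l, h1, h2⟩)
    · exact .thm h
    · exact .mp (.thm h2) (conj_mem_der h1)

/-! ### Saturated sets and Lindenbaum -/

def Sat (E : Form → Prop) (Δ : Set Form) (ψ : Form) : Prop :=
  ¬ Der E Δ ψ ∧ ∀ β, β ∉ Δ → Der E (insert β Δ) ψ

theorem chain_list {c : Set (Set Form)} (hc : IsChain (· ⊆ ·) c)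
    {s0 : Set Form} (hs0 : s0 ∈ c) (l : List Form)
    (hl : ∀ δ ∈ l, δ ∈ ⋃₀ c) : ∃ s ∈ c, ∀ δ ∈ l, δ ∈ s := by
  induction l with
  | nil => exact ⟨s0, hs0, by simp⟩
  | cons δ l ih =>
    obtain ⟨s, hs, hsl⟩ := ih (fun x hx => hl x (by simp [hx]))
    obtain ⟨t, ht, hδt⟩ := hl δ (by simp)
    rcases hc.total hs ht with hst | hts
    · refine ⟨t, ht, ?_⟩
      intro x hx; rcases List.mem_cons.1 hx with rfl | hx
      exacts [hδt, hst (hsl x hx)]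
    · refine ⟨s, hs, ?_⟩
      intro x hx; rcases List.mem_cons.1 hx with rfl | hx
      exacts [hts hδt, hsl x hx]

theorem lindenbaum {Γ : Set Form} {ψ : Form} (h : ¬ Der E Γ ψ) :
    ∃ Δ : Set Form, Γ ⊆ Δ ∧ Sat E Δ ψ := by
  have hub : ∀ c ⊆ {Δ : Set Form | ¬ Der E Δ ψ}, IsChain (· ⊆ ·) c → c.Nonempty →
      ∃ ub ∈ {Δ : Set Form | ¬ Der E Δ ψ}, ∀ s ∈ c, s ⊆ ub := by
    intro c hcS hchain hne
    obtain ⟨s0, hs0⟩ := hne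
    refine ⟨⋃₀ c, ?_, fun s hs => Set.subset_sUnion_of_mem hs⟩
    intro hd
    obtain ⟨l, hl, hdl⟩ := hd.compact
    obtain ⟨s, hs, hsl⟩ := chain_list hchain hs0 l hl
    exact hcS hs (hdl.mono (fun x hx => hsl x hx))
  obtain ⟨m, hm1, hm2⟩ :=
    zorn_subset_nonempty {Δ : Set Form | ¬ Der E Δ ψ} hub Γ h
  refine ⟨m, hm1, hm2.1, ?_⟩
  intro β hβ
  by_contra hnd
  have hsub : insert β m ⊆ m := hm2.2 hnd (Set.subset_insert β m)
  exact hβ (hsub (Set.mem_insert β m))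

theorem Sat.mem_of_der {Δ : Set Form} {ψ α : Form} (hS : Sat E Δ ψ)
    (h : Der E Δ α) : α ∈ Δ := by
  by_contra hn
  refine hS.1 ((hS.2 α hn).cut ?_)
  intro δ hδ
  rcases hδ with rfl | hδ
  exacts [h, .hyp hδ]

theorem Sat.prime {Δ : Set Form} {ψ α β : Form} (hS : Sat E Δ ψ)
    (h : (α.or β) ∈ Δ) : α ∈ Δ ∨ β ∈ Δ := by
  by_contra hn
  push_neg at hn
  have d1 := ded (hS.2 α hn.1)
  have d2 := ded (hS.2 β hn.2)
  exact hS.1 (.mp (.mp (.mp (.thm (.A8 α β ψ)) d1) d2) (.hyp h))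

theorem Sat.neg_mem {Δ : Set Form} {ψ α : Form} (hS : Sat E Δ ψ)
    (h : α ∉ Δ) : α.neg ∈ Δ := by
  rcases hS.prime (hS.mem_of_der (.thm (.EM α))) with h' | h'
  exacts [absurd h' h, h']

theorem or_imp_thm (E : Form → Prop) (α β : Form) : ThmExt E (α.or (α.imp β)) := by
  have hα : Der E (insert α (insert ((α.or (α.imp β)).imp β) ∅)) β :=
    .mp (.hyp (by simp)) (.mp (.thm (.A6 α (α.imp β))) (.hyp (by simp)))
  have h1 : Der E (insert ((α.or (α.imp β)).imp β) ∅) (α.or (α.imp β)) :=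
    .mp (.thm (.A7 α (α.imp β))) (ded hα)
  exact der_empty (.mp (.thm (.A9 (α.or (α.imp β)) β)) (ded h1))

theorem Sat.mem_and {Δ : Set Form} {ψ α β : Form} (hS : Sat E Δ ψ) :
    (α.and β) ∈ Δ ↔ α ∈ Δ ∧ β ∈ Δ := by
  constructor
  · intro h
    exact ⟨hS.mem_of_der (.mp (.thm (.A4 α β)) (.hyp h)),
      hS.mem_of_der (.mp (.thm (.A5 α β)) (.hyp h))⟩
  · rintro ⟨h1, h2⟩
    exact hS.mem_of_der (.mp (.mp (.thm (.A3 α β)) (.hyp h1)) (.hyp h2))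

theorem Sat.mem_or {Δ : Set Form} {ψ α β : Form} (hS : Sat E Δ ψ) :
    (α.or β) ∈ Δ ↔ α ∈ Δ ∨ β ∈ Δ := by
  constructor
  · exact hS.prime
  · rintro (h | h)
    exacts [hS.mem_of_der (.mp (.thm (.A6 α β)) (.hyp h)),
      hS.mem_of_der (.mp (.thm (.A7 α β)) (.hyp h))]

theorem Sat.mem_imp {Δ : Set Form} {ψ α β : Form} (hS : Sat E Δ ψ) :
    (α.imp β) ∈ Δ ↔ (α ∉ Δ ∨ β ∈ Δ) := by
  constructor
  · intro h
    by_cases ha : α ∈ Δ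
    · exact Or.inr (hS.mem_of_der (.mp (.hyp h) (.hyp ha)))
    · exact Or.inl ha
  · rintro (h | h)
    · rcases hS.prime (hS.mem_of_der (.thm (or_imp_thm E α β))) with h' | h'
      exacts [absurd h' h, h']
    · exact hS.mem_of_der (.mp (.thm (.A1 β α)) (.hyp h))

theorem Sat.not_both {Δ : Set Form} {ψ α : Form} (hS : Sat E Δ ψ)
    (hc : α.circ ∈ Δ) (ha : α ∈ Δ) (hn : α.neg ∈ Δ) : False :=
  hS.1 (.mp (.mp (.mp (.thm (.bc α ψ)) (.hyp hc)) (.hyp ha)) (.hyp hn))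

/-! ### Necessitation over finite sets -/

theorem obl_and {Γ : Set Form} {α β : Form} (h1 : Der E Γ α.obl)
    (h2 : Der E Γ β.obl) : Der E Γ (α.and β).obl := by
  have s1 : ThmExt E ((α.imp (β.imp (α.and β))).obl) := .nec (.A3 α β)
  have s2 : Der E Γ ((β.imp (α.and β)).obl) :=
    .mp (.mp (.thm (.OK α (β.imp (α.and β)))) (.thm s1)) h1
  exact .mp (.mp (.thm (.OK β (α.and β))) s2) h2

theorem conj_obl {Δ : Set Form} {γ : Form} {l : List Form}
    (h : ∀ δ ∈ γ :: l, Der E Δ δ.obl) : Der E Δ (conj γ l).obl := by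
  induction l generalizing γ with
  | nil => exact h γ (by simp)
  | cons ε l ih =>
    exact obl_and (h γ (by simp)) (ih (fun δ hδ => h δ (by simp at hδ ⊢; tauto)))

theorem der_obl {Δ : Set Form} {α : Form}
    (h : Der E {β | Form.obl β ∈ Δ} α) : Der E Δ α.obl := by
  obtain ⟨l, hl, hd⟩ := h.compact
  rcases l with _ | ⟨γ, l'⟩
  · exact .thm (.nec (der_empty (hd.mono (by simp))))
  · have hC : ThmExt E ((conj γ l').imp α) := thm_conj_imp hd
    have hOC : Der E Δ (conj γ l').obl :=
      conj_obl (fun δ hδ => .hyp (hl δ hδ))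
    exact .mp (.mp (.thm (.OK _ _)) (.thm (.nec hC))) hOC

/-! ### The canonical model -/

def World (E : Form → Prop) : Type := {Δ : Set Form // ∃ ψ, Sat E Δ ψ}

def Rel (E : Form → Prop) : World E → World E → Prop :=
  fun Δ Δ' => ∀ α, Form.obl α ∈ Δ.1 → α ∈ Δ'.1

open Classical in
noncomputable def val (E : Form → Prop) (Δ : World E) (α : Form) : SV :=
  if α ∈ Δ.1 then (if α.neg ∈ Δ.1 then SV.t else SV.T) else SV.F

theorem bool_eq_of_iff {a b : Bool} (h : a = true ↔ b = true) : a = b := by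
  cases a <;> cases b <;> simp_all

theorem bool_le_of_imp {a b : Bool} (h : a = true → b = true) : a ≤ b := by
  cases a <;> simp_all

theorem val_p1 (Δ : World E) (α : Form) : (val E Δ α).p1 = true ↔ α ∈ Δ.1 := by
  unfold val
  split_ifs with h1 h2 <;> simp [SV.p1, *]

theorem val_p2 (Δ : World E) (α : Form) : (val E Δ α).p2 = true ↔ α.neg ∈ Δ.1 := by
  obtain ⟨ψ, hS⟩ := Δ.2
  unfold val
  split_ifs with h1 h2
  · simpa [SV.p2] using h2
  · simpa [SV.p2] using h2
  · simpa [SV.p2] using hS.neg_mem h1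

theorem val_p1_false (Δ : World E) (α : Form) :
    (val E Δ α).p1 = false ↔ α ∉ Δ.1 := by
  rw [← val_p1 Δ α, Bool.not_eq_true]

theorem obl_back (Δ : World E) (α : Form) (h : α.obl ∉ Δ.1) :
    ∃ Δ' : World E, Rel E Δ Δ' ∧ α ∉ Δ'.1 := by
  obtain ⟨ψ, hS⟩ := Δ.2
  have hnd : ¬ Der E {β | Form.obl β ∈ Δ.1} α :=
    fun hd => h (hS.mem_of_der (der_obl hd))
  obtain ⟨Δ', hsub, hS'⟩ := lindenbaum hnd
  exact ⟨⟨Δ', α, hS'⟩, fun β hβ => hsub hβ, fun hmem => hS'.1 (.hyp hmem)⟩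

theorem canon_serial (Δ : World E) : ∃ Δ', Rel E Δ Δ' := by
  obtain ⟨ψ, hS⟩ := Δ.2
  have hnd : ¬ Der E {β | Form.obl β ∈ Δ.1} (Form.bot (Form.var 0)) := by
    intro hd
    have h2 : Der E Δ.1 (Form.bot (Form.var 0)) := .mp (.thm (.OE _)) (der_obl hd)
    have hc : Der E Δ.1 (Form.var 0).circ := .mp (.thm (.A5 _ _)) h2
    have ha : Der E Δ.1 ((Form.var 0).and (Form.var 0).neg) := .mp (.thm (.A4 _ _)) h2
    exact hS.1 (.mp (.mp (.mp (.thm (.bc (Form.var 0) ψ))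
      hc) (.mp (.thm (.A4 _ _)) ha)) (.mp (.thm (.A5 _ _)) ha))
  obtain ⟨Δ', hsub, hS'⟩ := lindenbaum hnd
  exact ⟨⟨Δ', _, hS'⟩, fun β hβ => hsub hβ⟩

theorem canon_and (Δ : World E) (α β : Form) :
    (val E Δ (α.and β)).p1 = ((val E Δ α).p1 && (val E Δ β).p1) := by
  obtain ⟨ψ, hS⟩ := Δ.2
  apply bool_eq_of_iff
  rw [Bool.and_eq_true, val_p1, val_p1, val_p1]
  exact hS.mem_and

theorem canon_or (Δ : World E) (α β : Form) :
    (val E Δ (α.or β)).p1 = ((val E Δ α).p1 || (val E Δ β).p1) := by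
  obtain ⟨ψ, hS⟩ := Δ.2
  apply bool_eq_of_iff
  rw [Bool.or_eq_true, val_p1, val_p1, val_p1]
  exact hS.mem_or

theorem canon_imp (Δ : World E) (α β : Form) :
    (val E Δ (α.imp β)).p1 = (!(val E Δ α).p1 || (val E Δ β).p1) := by
  obtain ⟨ψ, hS⟩ := Δ.2
  apply bool_eq_of_iff
  rw [Bool.or_eq_true, Bool.not_eq_true', val_p1, val_p1, val_p1_false, hS.mem_imp]

theorem canon_neg_p1 (Δ : World E) (α : Form) :
    (val E Δ α.neg).p1 = (val E Δ α).p2 :=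
  bool_eq_of_iff (by rw [val_p1, val_p2])

theorem canon_neg_p2 (hcf : ∀ α : Form, ThmExt E (α.neg.neg.imp α))
    (Δ : World E) (α : Form) : (val E Δ α.neg).p2 ≤ (val E Δ α).p1 := by
  obtain ⟨ψ, hS⟩ := Δ.2
  apply bool_le_of_imp
  rw [val_p2, val_p1]
  intro h
  exact hS.mem_of_der (.mp (.thm (hcf α)) (.hyp h))

theorem canon_circ_le (Δ : World E) (α : Form) :
    (val E Δ α.circ).p1 ≤ !((val E Δ α).p1 && (val E Δ α).p2) := by
  obtain ⟨ψ, hS⟩ := Δ.2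
  apply bool_le_of_imp
  rw [val_p1]
  intro h
  by_cases h1 : (val E Δ α).p1 = true
  · by_cases h2 : (val E Δ α).p2 = true
    · exact (hS.not_both h ((val_p1 Δ α).1 h1) ((val_p2 Δ α).1 h2)).elim
    · rw [h1, Bool.eq_false_iff.2 h2]; rfl
  · rw [Bool.eq_false_iff.2 h1]; rfl

theorem canon_circ_eq
    (hback : ∀ (Δ : World E) (α : Form), α.circ ∉ Δ.1 → (α.and α.neg) ∈ Δ.1)
    (Δ : World E) (α : Form) :
    (val E Δ α.circ).p1 = !((val E Δ α).p1 && (val E Δ α).p2) := by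
  obtain ⟨ψ, hS⟩ := Δ.2
  by_cases h : α.circ ∈ Δ.1
  · rw [(val_p1 Δ α.circ).2 h]
    by_cases h1 : (val E Δ α).p1 = true
    · by_cases h2 : (val E Δ α).p2 = true
      · exact (hS.not_both h ((val_p1 Δ α).1 h1) ((val_p2 Δ α).1 h2)).elim
      · rw [h1, Bool.eq_false_iff.2 h2]; rfl
    · rw [Bool.eq_false_iff.2 h1]; rfl
  · have hmem := hback Δ α h
    obtain ⟨ha, hn⟩ := hS.mem_and.1 hmem
    rw [(val_p1_false Δ α.circ).2 h, (val_p1 Δ α).2 ha, (val_p2 Δ α).2 hn]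
    rfl

theorem canon_circ_p2 (hci : ∀ α : Form, ThmExt E (α.circ.neg.imp (α.and α.neg)))
    (Δ : World E) (α : Form) :
    (val E Δ α.circ).p2 = ((val E Δ α).p1 && (val E Δ α).p2) := by
  obtain ⟨ψ, hS⟩ := Δ.2
  apply bool_eq_of_iff
  rw [Bool.and_eq_true, val_p2, val_p1, val_p2]
  constructor
  · intro h
    have := hS.mem_of_der (.mp (.thm (hci α)) (.hyp h))
    exact hS.mem_and.1 this
  · rintro ⟨h1, h2⟩
    have hnc : α.circ ∉ Δ.1 := fun hc => hS.not_both hc h1 h2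
    exact hS.neg_mem hnc

theorem canon_obl (Δ : World E) (α : Form) :
    ((val E Δ α.obl).p1 = true ↔ ∀ Δ', Rel E Δ Δ' → (val E Δ' α).p1 = true) := by
  rw [val_p1]
  constructor
  · intro h Δ' hR
    exact (val_p1 Δ' α).2 (hR α h)
  · intro h
    by_contra hn
    obtain ⟨Δ', hR, hα⟩ := obl_back Δ α hn
    exact hα ((val_p1 Δ' α).1 (h Δ' hR))

/-! ### Per-logic model verification -/

theorem ciback (L : ExtLogic)
    (h : (∀ α : Form, ThmExt (extAx L) (α.circ.or (α.and α.neg))) ∨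
         (∀ α : Form, ThmExt (extAx L) (α.circ.neg.imp (α.and α.neg))))
    (Δ : World (extAx L)) (α : Form) (hn : α.circ ∉ Δ.1) :
    (α.and α.neg) ∈ Δ.1 := by
  obtain ⟨ψ, hS⟩ := Δ.2
  rcases h with h | h
  · rcases hS.prime (hS.mem_of_der (.thm (h α))) with h' | h'
    exacts [absurd h' hn, h']
  · exact hS.mem_of_der (.mp (.thm (h α)) (.hyp (hS.neg_mem hn)))

theorem isModel (L : ExtLogic) :
    IsModelExt L (Rel (extAx L)) (val (extAx L)) := by
  refine ⟨canon_serial, canon_and, canon_or, canon_imp, ?_, ?_, canon_obl⟩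
  · intro Δ α
    cases L with
    | DmbCciw => exact canon_neg_p1 Δ α
    | DmbCci => exact canon_neg_p1 Δ α
    | DbC =>
      exact ⟨canon_neg_p1 Δ α,
        canon_neg_p2 (fun β => .extra (show cfAx _ from ⟨β, rfl⟩)) Δ α⟩
    | DCi =>
      exact ⟨canon_neg_p1 Δ α,
        canon_neg_p2 (fun β => .extra (Or.inr (show cfAx _ from ⟨β, rfl⟩))) Δ α⟩
  · intro Δ α
    cases L with
    | DmbCciw =>
      exact canon_circ_eq
        (ciback ExtLogic.DmbCciw (Or.inl (fun β => .extra (show ciwAx _ from ⟨β, rfl⟩)))) Δ α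
    | DmbCci =>
      exact ⟨canon_circ_eq
          (ciback ExtLogic.DmbCci (Or.inr (fun β => .extra (show ciAx _ from ⟨β, rfl⟩)))) Δ α,
        canon_circ_p2 (fun β => .extra (show ciAx _ from ⟨β, rfl⟩)) Δ α⟩
    | DbC => exact canon_circ_le Δ α
    | DCi =>
      exact ⟨canon_circ_eq
          (ciback ExtLogic.DCi (Or.inr (fun β => .extra (Or.inl (show ciAx _ from ⟨β, rfl⟩))))) Δ α,
        canon_circ_p2 (fun β => .extra (Or.inl (show ciAx _ from ⟨β, rfl⟩))) Δ α⟩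

end Completeness

open Completeness in
theorem ext_completeness' (L : ExtLogic) (Γ : Set Form) (φ : Form) :
    SemExt L Γ φ → DerivExt L Γ φ := by
  intro hsem
  rw [← der_iff]
  by_contra hnd
  obtain ⟨Δ, hsub, hS⟩ := lindenbaum hnd
  set w : World (extAx L) := ⟨Δ, φ, hS⟩ with hw
  have hdes := hsem (World (extAx L)) (Rel (extAx L)) (val (extAx L))
    ⟨w⟩ (isModel L) w (fun γ hγ => (val_p1 w γ).2 (hsub hγ))
  exact hS.1 (.hyp ((val_p1 w φ).1 hdes))

/-- Completeness of DmbCciw, DmbCci, DbC, DCi w.r.t. swap Kripke models. -/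
theorem ext_completeness (L : ExtLogic) (Γ : Set Form) (φ : Form) :
    SemExt L Γ φ → DerivExt L Γ φ := ext_completeness' L Γ φ
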